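/- Let K_t ⊂ ℝ be a bounded interval of length h_t > 0, let K_x ⊂ ℝ^d be a bounded measurable set with 0 < |K_x| < ∞, and set K = K_t × K_x. Let h_x > 0 and C_x > 0, and let v ∈ L²(K) and g ∈ L²(K) be such that for almost every t ∈ K_t the spatial Poincaré inequality ‖v(t,·) − ⟨v(t,·)⟩_{K_x}‖_{L²(K_x)} ≤ C_x h_x ‖g(t,·)‖_{L²(K_x)} holds. Then ‖v − ⟨v⟩_K‖²_{L²(K)} ≤ C_x² h_x² ‖g‖²_{L²(K)} + h_t ∫_{K_t} ∫_{K_t} ‖v(t,·) − v(s,·)‖²_{L²(K_x)} |t−s|^{-2} ds dt. -/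

import Mathlib

open MeasureTheory Set

set_option maxHeartbeats 1000000

lemma jensen_sq {α : Type*} [MeasurableSpace α] {ν : Measure α} [IsFiniteMeasure ν]
    {f : α → ℝ} (hf : MemLp f 2 ν) :
    (∫ x, f x ∂ν) ^ 2 ≤ (ν univ).toReal * ∫ x, f x ^ 2 ∂ν := by
  rcases eq_or_ne ν 0 with rfl | hν
  · simp
  have hN : 0 < (ν univ).toReal :=
    ENNReal.toReal_pos (by simpa [Measure.measure_univ_eq_zero] using hν) (measure_ne_top _ _)
  set N := (ν univ).toReal with hNdef
  have hfi : Integrable f ν := hf.integrable one_le_two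
  have hf2 : Integrable (fun x => f x ^ 2) ν := hf.integrable_sq
  set I := ∫ x, f x ∂ν with hI
  set c : ℝ := I / N with hc
  have key : 0 ≤ ∫ x, (f x - c) ^ 2 ∂ν := integral_nonneg fun x => sq_nonneg _
  have expand : ∫ x, (f x - c) ^ 2 ∂ν
      = (∫ x, f x ^ 2 ∂ν) - 2 * c * I + N * c ^ 2 := by
    have h1 : ∫ x, (f x - c) ^ 2 ∂ν
        = ∫ x, (f x ^ 2 - 2 * c * f x + c ^ 2) ∂ν :=
      integral_congr_ae (Filter.Eventually.of_forall fun x => by ring)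
    rw [h1]
    have h2 : ∫ x, (f x ^ 2 - 2 * c * f x + c ^ 2) ∂ν
        = (∫ x, (f x ^ 2 - 2 * c * f x) ∂ν) + ∫ _x, c ^ 2 ∂ν :=
      integral_add (hf2.sub (hfi.const_mul _)) (integrable_const _)
    rw [h2, integral_sub hf2 (hfi.const_mul _), integral_const_mul, integral_const,
      smul_eq_mul, measureReal_def]
  rw [expand, hc] at key
  have hN' : N ≠ 0 := ne_of_gt hN
  have : 0 ≤ (∫ x, f x ^ 2 ∂ν) - I ^ 2 / N := by
    have e : (∫ x, f x ^ 2 ∂ν) - 2 * (I / N) * I + N * (I / N) ^ 2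
        = (∫ x, f x ^ 2 ∂ν) - I ^ 2 / N := by field_simp; ring
    linarith [e ▸ key]
  have h3 : I ^ 2 / N ≤ ∫ x, f x ^ 2 ∂ν := by linarith
  calc I ^ 2 = N * (I ^ 2 / N) := by field_simp
  _ ≤ N * ∫ x, f x ^ 2 ∂ν := mul_le_mul_of_nonneg_left h3 (le_of_lt hN)


/-- The measure on the time-space cylinder `K = K_t × K_x`. -/
noncomputable def cylMeasure {d : ℕ} (Kt : Set ℝ) (Kx : Set (Fin d → ℝ)) :
    Measure (ℝ × (Fin d → ℝ)) :=
  (volume.restrict Kt).prod (volume.restrict Kx)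

/-- The spatial mean `⟨v(t,·)⟩_{K_x}` of `v(t,·)` over `K_x`. -/
noncomputable def spatialMean {d : ℕ} (Kx : Set (Fin d → ℝ))
    (v : ℝ → (Fin d → ℝ) → ℝ) (t : ℝ) : ℝ :=
  (volume Kx).toReal⁻¹ * ∫ x in Kx, v t x

/-- The mean `⟨v⟩_K` of `v` over the cylinder `K = K_t × K_x`. -/
noncomputable def cylMean {d : ℕ} (Kt : Set ℝ) (Kx : Set (Fin d → ℝ))
    (v : ℝ → (Fin d → ℝ) → ℝ) : ℝ :=
  ((cylMeasure Kt Kx) univ).toReal⁻¹ * ∫ p, v p.1 p.2 ∂(cylMeasure Kt Kx)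

/-- Parabolic Poincaré inequality (Lemma 4.3): on a time-space cylinder
`K = K_t × K_x` with `|K_t| = h_t`, if for a.e. `t` the spatial Poincaré
inequality `‖v(t,·) − ⟨v(t,·)⟩_{K_x}‖_{L²(K_x)} ≤ C_x h_x ‖g(t,·)‖_{L²(K_x)}`
holds, then
`‖v − ⟨v⟩_K‖²_{L²(K)} ≤ C_x² h_x² ‖g‖²_{L²(K)}
  + h_t ∫∫ ‖v(t,·) − v(s,·)‖²_{L²(K_x)} |t−s|⁻² ds dt`. -/
theorem stmt_2 {d : ℕ} (a b ht : ℝ) (hab : a < b) (hht : b - a = ht)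
    (Kx : Set (Fin d → ℝ)) (hKxm : MeasurableSet Kx)
    (hKx0 : 0 < volume Kx) (hKxfin : volume Kx < ⊤)
    (hx Cx : ℝ) (hhx : 0 < hx) (hCx : 0 < Cx)
    (v g : ℝ → (Fin d → ℝ) → ℝ)
    (hv : MemLp (fun p : ℝ × (Fin d → ℝ) => v p.1 p.2) 2 (cylMeasure (Ioo a b) Kx))
    (hg : MemLp (fun p : ℝ × (Fin d → ℝ) => g p.1 p.2) 2 (cylMeasure (Ioo a b) Kx))
    (hpoin : ∀ᵐ t ∂(volume.restrict (Ioo a b)),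
      (∫ x in Kx, (v t x - spatialMean Kx v t) ^ 2)
        ≤ (Cx * hx) ^ 2 * ∫ x in Kx, g t x ^ 2) :
    (∫⁻ p, ENNReal.ofReal ((v p.1 p.2 - cylMean (Ioo a b) Kx v) ^ 2)
        ∂(cylMeasure (Ioo a b) Kx))
      ≤ ENNReal.ofReal (Cx ^ 2 * hx ^ 2) *
            (∫⁻ p, ENNReal.ofReal (g p.1 p.2 ^ 2) ∂(cylMeasure (Ioo a b) Kx))
        + ENNReal.ofReal ht *
            ∫⁻ t in Ioo a b, ∫⁻ s in Ioo a b, ∫⁻ x in Kx,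
              ENNReal.ofReal ((v t x - v s x) ^ 2 / |t - s| ^ 2) := by
  have hht0 : 0 < ht := by linarith
  set μt := volume.restrict (Ioo a b) with hμt
  set μx := volume.restrict Kx with hμx
  have hμtuniv : μt univ = ENNReal.ofReal ht := by
    rw [hμt, Measure.restrict_apply_univ, Real.volume_Ioo, hht]
  have hμxuniv : μx univ = volume Kx := by rw [hμx, Measure.restrict_apply_univ]
  haveI : IsFiniteMeasure μt := ⟨by rw [hμtuniv]; exact ENNReal.ofReal_lt_top⟩
  haveI : IsFiniteMeasure μx := ⟨by rw [hμxuniv]; exact hKxfin⟩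
  set Nx := (volume Kx).toReal with hNxdef
  have hNx0 : 0 < Nx := ENNReal.toReal_pos hKx0.ne' hKxfin.ne
  have hNxr : (μx univ).toReal = Nx := by rw [hμxuniv]
  have hμtoReal : (μt univ).toReal = ht := by
    rw [hμtuniv, ENNReal.toReal_ofReal hht0.le]
  have hμ : cylMeasure (Ioo a b) Kx = μt.prod μx := rfl
  rw [hμ] at hv hg ⊢
  set c := cylMean (Ioo a b) Kx v with hcdef
  set m := spatialMean Kx v with hmdef
  have hm_eq : ∀ t, m t = Nx⁻¹ * ∫ x, v t x ∂μx := fun t => rfl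
  -- slices of v are in L²
  have hvs : ∀ᵐ t ∂μt, MemLp (fun x => v t x) 2 μx := by
    have h1 : ∀ᵐ t ∂μt, Integrable (fun x => v t x ^ 2) μx :=
      (hv.integrable_sq).prod_right_ae
    have h2 : ∀ᵐ t ∂μt, AEStronglyMeasurable (fun x => v t x) μx :=
      hv.aestronglyMeasurable.prodMk_left
    filter_upwards [h1, h2] with t h1 h2
    exact (memLp_two_iff_integrable_sq h2).mpr h1
  -- mean-zero of v t - m t
  have hmz : ∀ t, MemLp (fun x => v t x) 2 μx → (∫ x, (v t x - m t) ∂μx) = 0 := by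
    intro t h
    have hint : Integrable (fun x => v t x) μx := h.integrable one_le_two
    rw [integral_sub hint (integrable_const _), integral_const, smul_eq_mul, measureReal_def, hNxr, hm_eq]
    field_simp
    ring
  -- orthogonality per time slice
  have horth : ∀ᵐ t ∂μt, ∫ x, (v t x - c) ^ 2 ∂μx
      = (∫ x, (v t x - m t) ^ 2 ∂μx) + Nx * (m t - c) ^ 2 := by
    filter_upwards [hvs] with t hsl
    have hA : MemLp (fun x => v t x - m t) 2 μx := hsl.sub (memLp_const _)
    have hAi : Integrable (fun x => v t x - m t) μx := hA.integrable one_le_two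
    have hA2 : Integrable (fun x => (v t x - m t) ^ 2) μx := hA.integrable_sq
    have hz := hmz t hsl
    calc ∫ x, (v t x - c) ^ 2 ∂μx
        = ∫ x, ((v t x - m t) ^ 2 + (2 * (m t - c)) * (v t x - m t) + (m t - c) ^ 2) ∂μx :=
          integral_congr_ae (Filter.Eventually.of_forall fun x => by ring)
      _ = (∫ x, (v t x - m t) ^ 2 ∂μx) + Nx * (m t - c) ^ 2 := by
          have hB : Integrable (fun x => 2 * (m t - c) * (v t x - m t)) μx :=
            hAi.const_mul _
          have hAB : Integrable
              (fun x => (v t x - m t) ^ 2 + 2 * (m t - c) * (v t x - m t)) μx :=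
            hA2.add hB
          rw [integral_add hAB (integrable_const _), integral_add hA2 hB,
            integral_const_mul, hz, integral_const, smul_eq_mul, measureReal_def, hNxr]
          ring
  -- Fubini facts
  have hw2 : Integrable (fun p : ℝ × (Fin d → ℝ) => (v p.1 p.2 - c) ^ 2) (μt.prod μx) :=
    (hv.sub (memLp_const _)).integrable_sq
  have hFub : ∫ p : ℝ × (Fin d → ℝ), (v p.1 p.2 - c) ^ 2 ∂(μt.prod μx)
      = ∫ t, (∫ x, (v t x - c) ^ 2 ∂μx) ∂μt := integral_prod _ hw2
  have hg2 : Integrable (fun p : ℝ × (Fin d → ℝ) => g p.1 p.2 ^ 2) (μt.prod μx) :=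
    hg.integrable_sq
  have hgFub : ∫ p : ℝ × (Fin d → ℝ), g p.1 p.2 ^ 2 ∂(μt.prod μx)
      = ∫ t, (∫ x, g t x ^ 2 ∂μx) ∂μt := integral_prod _ hg2
  have hGint : Integrable (fun t => ∫ x, g t x ^ 2 ∂μx) μt := hg2.integral_prod_left
  -- m is in L² of μt
  have hm_meas : AEStronglyMeasurable m μt := by
    have h := hv.aestronglyMeasurable.integral_prod_right'
    exact h.const_mul Nx⁻¹
  have hVint : Integrable (fun t => ∫ x, v t x ^ 2 ∂μx) μt :=
    hv.integrable_sq.integral_prod_left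
  have hm_sq : Integrable (fun t => m t ^ 2) μt := by
    have hms : AEStronglyMeasurable (fun t => m t ^ 2) μt := by
      exact hm_meas.pow 2
    refine Integrable.mono' (hVint.const_mul Nx⁻¹) hms ?_
    filter_upwards [hvs] with t hsl
    have hj := jensen_sq (ν := μx) hsl
    rw [hNxr] at hj
    rw [Real.norm_eq_abs, abs_of_nonneg (sq_nonneg _)]
    have e : m t ^ 2 = Nx⁻¹ ^ 2 * (∫ x, v t x ∂μx) ^ 2 := by rw [hm_eq]; ring
    calc m t ^ 2 = Nx⁻¹ ^ 2 * (∫ x, v t x ∂μx) ^ 2 := e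
      _ ≤ Nx⁻¹ ^ 2 * (Nx * ∫ x, v t x ^ 2 ∂μx) := by
          exact mul_le_mul_of_nonneg_left hj (by positivity)
      _ = Nx⁻¹ * ∫ x, v t x ^ 2 ∂μx := by
          field_simp
  have hm2 : MemLp m 2 μt := (memLp_two_iff_integrable_sq hm_meas).mpr hm_sq
  have hmi : Integrable m μt := hm2.integrable one_le_two
  have hmc2 : Integrable (fun t => (m t - c) ^ 2) μt := (hm2.sub (memLp_const c)).integrable_sq
  -- identity for c
  have hvi : Integrable (fun p : ℝ × (Fin d → ℝ) => v p.1 p.2) (μt.prod μx) :=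
    hv.integrable one_le_two
  have hc_eq : c = ht⁻¹ * ∫ t, m t ∂μt := by
    have huniv : ((μt.prod μx) univ).toReal = ht * Nx := by
      rw [← univ_prod_univ, Measure.prod_prod, ENNReal.toReal_mul, hμtoReal, hNxr]
    have hsum : ∫ p : ℝ × (Fin d → ℝ), v p.1 p.2 ∂(μt.prod μx)
        = ∫ t, (∫ x, v t x ∂μx) ∂μt := integral_prod _ hvi
    have hinner : ∫ t, (∫ x, v t x ∂μx) ∂μt = Nx * ∫ t, m t ∂μt := by
      rw [← integral_const_mul]
      refine integral_congr_ae (Filter.Eventually.of_forall fun t => ?_)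
      show (∫ x, v t x ∂μx) = Nx * m t
      rw [hm_eq t]
      field_simp
    rw [hcdef]
    show ((μt.prod μx) univ).toReal⁻¹ * ∫ p : ℝ × (Fin d → ℝ), v p.1 p.2 ∂(μt.prod μx)
        = ht⁻¹ * ∫ t, m t ∂μt
    rw [huniv, hsum, hinner, mul_inv]
    field_simp
  -- time Jensen
  have hB4 : ∀ t, (m t - c) ^ 2 ≤ ht⁻¹ * ∫ s, (m t - m s) ^ 2 ∂μt := by
    intro t
    have hf : MemLp (fun s => m t - m s) 2 μt := (memLp_const (m t)).sub hm2
    have hj := jensen_sq hf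
    rw [hμtoReal] at hj
    have h5 : ∫ s, (m t - m s) ∂μt = ht * (m t - c) := by
      rw [integral_sub (integrable_const _) hmi, integral_const, measureReal_def, hμtoReal, smul_eq_mul,
        hc_eq]
      field_simp
    rw [h5, mul_pow] at hj
    have h6 : (m t - c) ^ 2 * ht ≤ ∫ s, (m t - m s) ^ 2 ∂μt := by
      have h7 : ht * ((m t - c) ^ 2 * ht) ≤ ht * ∫ s, (m t - m s) ^ 2 ∂μt := by
        calc ht * ((m t - c) ^ 2 * ht) = ht ^ 2 * (m t - c) ^ 2 := by ring
          _ ≤ ht * ∫ s, (m t - m s) ^ 2 ∂μt := hj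
      exact le_of_mul_le_mul_left h7 hht0
    calc (m t - c) ^ 2 = ht⁻¹ * ((m t - c) ^ 2 * ht) := by field_simp
      _ ≤ ht⁻¹ * ∫ s, (m t - m s) ^ 2 ∂μt :=
          mul_le_mul_of_nonneg_left h6 (inv_nonneg.mpr hht0.le)
  -- pointwise space-time claim
  have hpoint : ∀ᵐ t ∂μt, ∀ᵐ s ∂μt,
      ENNReal.ofReal ((m t - m s) ^ 2)
        ≤ ENNReal.ofReal (ht ^ 2 / Nx) *
            ∫⁻ x, ENNReal.ofReal ((v t x - v s x) ^ 2 / |t - s| ^ 2) ∂μx := by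
    have hmemt : ∀ᵐ t ∂μt, t ∈ Ioo a b := ae_restrict_mem measurableSet_Ioo
    filter_upwards [hvs, hmemt] with t hslt htmem
    filter_upwards [hvs, hmemt] with s hsls hsmem
    rcases eq_or_ne t s with rfl | hts
    · simp
    have habs : 0 < |t - s| := abs_pos.mpr (sub_ne_zero.mpr hts)
    have habslt : |t - s| < ht := by
      obtain ⟨ht1, ht2⟩ := htmem
      obtain ⟨hs1, hs2⟩ := hsmem
      rw [abs_sub_lt_iff]
      constructor <;> linarith
    have hfm : MemLp (fun x => v t x - v s x) 2 μx := hslt.sub hsls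
    have hfi2 : Integrable (fun x => (v t x - v s x) ^ 2) μx := hfm.integrable_sq
    have hj := jensen_sq hfm
    rw [hNxr] at hj
    have hdm : m t - m s = Nx⁻¹ * ∫ x, (v t x - v s x) ∂μx := by
      rw [hm_eq, hm_eq,
        integral_sub (hslt.integrable one_le_two) (hsls.integrable one_le_two)]
      ring
    have hS : 0 ≤ ∫ x, (v t x - v s x) ^ 2 ∂μx := integral_nonneg fun x => sq_nonneg _
    have hreal : (m t - m s) ^ 2
        ≤ (ht ^ 2 / Nx) * ∫ x, (v t x - v s x) ^ 2 / |t - s| ^ 2 ∂μx := by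
      have hdiv : ∫ x, (v t x - v s x) ^ 2 / |t - s| ^ 2 ∂μx
          = (∫ x, (v t x - v s x) ^ 2 ∂μx) / |t - s| ^ 2 := integral_div _ _
      rw [hdiv, hdm]
      set S := ∫ x, (v t x - v s x) ^ 2 ∂μx
      set I := ∫ x, (v t x - v s x) ∂μx
      have h1 : (Nx⁻¹ * I) ^ 2 ≤ Nx⁻¹ * S := by
        have : (Nx⁻¹ * I) ^ 2 = Nx⁻¹ ^ 2 * I ^ 2 := by ring
        rw [this]
        calc Nx⁻¹ ^ 2 * I ^ 2 ≤ Nx⁻¹ ^ 2 * (Nx * S) :=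
              mul_le_mul_of_nonneg_left hj (by positivity)
          _ = Nx⁻¹ * S := by field_simp
      have h2 : Nx⁻¹ * S ≤ ht ^ 2 / Nx * (S / |t - s| ^ 2) := by
        have hsq : |t - s| ^ 2 ≤ ht ^ 2 := by nlinarith [habs, habslt]
        have h2' : S / Nx ≤ ht ^ 2 * S / (Nx * |t - s| ^ 2) := by
          rw [div_le_div_iff₀ hNx0 (by positivity)]
          nlinarith [mul_le_mul_of_nonneg_left hsq (mul_nonneg hS hNx0.le)]
        calc Nx⁻¹ * S = S / Nx := by ring
          _ ≤ ht ^ 2 * S / (Nx * |t - s| ^ 2) := h2'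
          _ = ht ^ 2 / Nx * (S / |t - s| ^ 2) := by rw [div_mul_div_comm]
      exact h1.trans h2
    have hint2 : Integrable (fun x => (v t x - v s x) ^ 2 / |t - s| ^ 2) μx :=
      hfi2.div_const _
    calc ENNReal.ofReal ((m t - m s) ^ 2)
        ≤ ENNReal.ofReal ((ht ^ 2 / Nx) * ∫ x, (v t x - v s x) ^ 2 / |t - s| ^ 2 ∂μx) :=
          ENNReal.ofReal_le_ofReal hreal
      _ = ENNReal.ofReal (ht ^ 2 / Nx) *
            ENNReal.ofReal (∫ x, (v t x - v s x) ^ 2 / |t - s| ^ 2 ∂μx) :=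
          ENNReal.ofReal_mul (by positivity)
      _ = ENNReal.ofReal (ht ^ 2 / Nx) *
            ∫⁻ x, ENNReal.ofReal ((v t x - v s x) ^ 2 / |t - s| ^ 2) ∂μx := by
          rw [ofReal_integral_eq_lintegral_ofReal hint2
            (Filter.Eventually.of_forall fun x => by positivity)]
  set T := ∫⁻ t, (∫⁻ s, (∫⁻ x, ENNReal.ofReal ((v t x - v s x) ^ 2 / |t - s| ^ 2) ∂μx)
      ∂μt) ∂μt with hT
  have hinner_int : ∀ t : ℝ, Integrable (fun s => (m t - m s) ^ 2) μt := fun t =>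
    ((memLp_const (m t)).sub hm2).integrable_sq
  -- the B chain
  have hBchain : ENNReal.ofReal (Nx * ∫ t, (m t - c) ^ 2 ∂μt) ≤ ENNReal.ofReal ht * T := by
    calc ENNReal.ofReal (Nx * ∫ t, (m t - c) ^ 2 ∂μt)
        = ENNReal.ofReal Nx * ENNReal.ofReal (∫ t, (m t - c) ^ 2 ∂μt) :=
          ENNReal.ofReal_mul hNx0.le
      _ = ENNReal.ofReal Nx * ∫⁻ t, ENNReal.ofReal ((m t - c) ^ 2) ∂μt := by
          rw [ofReal_integral_eq_lintegral_ofReal hmc2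
            (Filter.Eventually.of_forall fun t => sq_nonneg _)]
      _ ≤ ENNReal.ofReal Nx * ∫⁻ t,
            (ENNReal.ofReal ht⁻¹ * ∫⁻ s, ENNReal.ofReal ((m t - m s) ^ 2) ∂μt) ∂μt := by
          refine mul_le_mul_right (lintegral_mono_ae (Filter.Eventually.of_forall fun t => ?_)) _
          calc ENNReal.ofReal ((m t - c) ^ 2)
              ≤ ENNReal.ofReal (ht⁻¹ * ∫ s, (m t - m s) ^ 2 ∂μt) :=
                ENNReal.ofReal_le_ofReal (hB4 t)
            _ = ENNReal.ofReal ht⁻¹ * ENNReal.ofReal (∫ s, (m t - m s) ^ 2 ∂μt) :=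
                ENNReal.ofReal_mul (inv_nonneg.mpr hht0.le)
            _ = ENNReal.ofReal ht⁻¹ * ∫⁻ s, ENNReal.ofReal ((m t - m s) ^ 2) ∂μt := by
                rw [ofReal_integral_eq_lintegral_ofReal (hinner_int t)
                  (Filter.Eventually.of_forall fun s => sq_nonneg _)]
      _ = ENNReal.ofReal Nx * (ENNReal.ofReal ht⁻¹ *
            ∫⁻ t, (∫⁻ s, ENNReal.ofReal ((m t - m s) ^ 2) ∂μt) ∂μt) := by
          rw [lintegral_const_mul' _ _ ENNReal.ofReal_ne_top]
      _ ≤ ENNReal.ofReal Nx * (ENNReal.ofReal ht⁻¹ *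
            ∫⁻ t, (ENNReal.ofReal (ht ^ 2 / Nx) *
              ∫⁻ s, (∫⁻ x, ENNReal.ofReal ((v t x - v s x) ^ 2 / |t - s| ^ 2) ∂μx) ∂μt) ∂μt) := by
          refine mul_le_mul_right (mul_le_mul_right (lintegral_mono_ae ?_) _) _
          filter_upwards [hpoint] with t hpt
          calc (∫⁻ s, ENNReal.ofReal ((m t - m s) ^ 2) ∂μt)
              ≤ ∫⁻ s, ENNReal.ofReal (ht ^ 2 / Nx) *
                  (∫⁻ x, ENNReal.ofReal ((v t x - v s x) ^ 2 / |t - s| ^ 2) ∂μx) ∂μt :=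
                lintegral_mono_ae hpt
            _ = ENNReal.ofReal (ht ^ 2 / Nx) *
                  ∫⁻ s, (∫⁻ x, ENNReal.ofReal ((v t x - v s x) ^ 2 / |t - s| ^ 2) ∂μx) ∂μt :=
                lintegral_const_mul' _ _ ENNReal.ofReal_ne_top
      _ = (ENNReal.ofReal Nx * (ENNReal.ofReal ht⁻¹ * ENNReal.ofReal (ht ^ 2 / Nx))) * T := by
          rw [lintegral_const_mul' _ _ ENNReal.ofReal_ne_top, ← hT]
          ring
      _ = ENNReal.ofReal ht * T := by
          rw [← ENNReal.ofReal_mul (inv_nonneg.mpr hht0.le), ← ENNReal.ofReal_mul hNx0.le]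
          congr 1
          field_simp
  -- main real inequality
  have hmain : ∫ p : ℝ × (Fin d → ℝ), (v p.1 p.2 - c) ^ 2 ∂(μt.prod μx)
      ≤ (Cx * hx) ^ 2 * (∫ p : ℝ × (Fin d → ℝ), g p.1 p.2 ^ 2 ∂(μt.prod μx))
        + Nx * ∫ t, (m t - c) ^ 2 ∂μt := by
    rw [hFub, hgFub]
    have hb_int : Integrable
        (fun t => (Cx * hx) ^ 2 * (∫ x, g t x ^ 2 ∂μx) + Nx * (m t - c) ^ 2) μt :=
      (hGint.const_mul _).add (hmc2.const_mul _)
    have hle : ∀ᵐ t ∂μt, (∫ x, (v t x - c) ^ 2 ∂μx)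
        ≤ (Cx * hx) ^ 2 * (∫ x, g t x ^ 2 ∂μx) + Nx * (m t - c) ^ 2 := by
      filter_upwards [horth, hpoin] with t h1 h2
      rw [h1]
      linarith
    calc ∫ t, (∫ x, (v t x - c) ^ 2 ∂μx) ∂μt
        ≤ ∫ t, ((Cx * hx) ^ 2 * (∫ x, g t x ^ 2 ∂μx) + Nx * (m t - c) ^ 2) ∂μt :=
          integral_mono_of_nonneg
            (Filter.Eventually.of_forall fun t => integral_nonneg fun x => sq_nonneg _)
            hb_int hle
      _ = (Cx * hx) ^ 2 * (∫ t, (∫ x, g t x ^ 2 ∂μx) ∂μt) + Nx * ∫ t, (m t - c) ^ 2 ∂μt := by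
          rw [integral_add (hGint.const_mul _) (hmc2.const_mul _), integral_const_mul,
            integral_const_mul]
  -- final assembly
  have hLHS : (∫⁻ p, ENNReal.ofReal ((v p.1 p.2 - c) ^ 2) ∂(μt.prod μx))
      = ENNReal.ofReal (∫ p : ℝ × (Fin d → ℝ), (v p.1 p.2 - c) ^ 2 ∂(μt.prod μx)) :=
    (ofReal_integral_eq_lintegral_ofReal hw2
      (Filter.Eventually.of_forall fun p => sq_nonneg _)).symm
  have hg_lint : (∫⁻ p, ENNReal.ofReal (g p.1 p.2 ^ 2) ∂(μt.prod μx))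
      = ENNReal.ofReal (∫ p : ℝ × (Fin d → ℝ), g p.1 p.2 ^ 2 ∂(μt.prod μx)) :=
    (ofReal_integral_eq_lintegral_ofReal hg2
      (Filter.Eventually.of_forall fun p => sq_nonneg _)).symm
  calc (∫⁻ p, ENNReal.ofReal ((v p.1 p.2 - c) ^ 2) ∂(μt.prod μx))
      = ENNReal.ofReal (∫ p : ℝ × (Fin d → ℝ), (v p.1 p.2 - c) ^ 2 ∂(μt.prod μx)) := hLHS
    _ ≤ ENNReal.ofReal ((Cx * hx) ^ 2 * (∫ p : ℝ × (Fin d → ℝ), g p.1 p.2 ^ 2 ∂(μt.prod μx))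
          + Nx * ∫ t, (m t - c) ^ 2 ∂μt) := ENNReal.ofReal_le_ofReal hmain
    _ ≤ ENNReal.ofReal ((Cx * hx) ^ 2 * ∫ p : ℝ × (Fin d → ℝ), g p.1 p.2 ^ 2 ∂(μt.prod μx))
          + ENNReal.ofReal (Nx * ∫ t, (m t - c) ^ 2 ∂μt) := ENNReal.ofReal_add_le
    _ ≤ ENNReal.ofReal (Cx ^ 2 * hx ^ 2) *
          (∫⁻ p, ENNReal.ofReal (g p.1 p.2 ^ 2) ∂(μt.prod μx))
        + ENNReal.ofReal ht * T := by
        refine add_le_add ?_ hBchain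
        rw [hg_lint, ← ENNReal.ofReal_mul (by positivity)]
        apply ENNReal.ofReal_le_ofReal
        apply le_of_eq
        ring
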